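/- Let n ≥ 1 and let e₁, …, eₙ be integers with |f(e₁, …, eₙ)| ≤ 1. Then |eᵢ| ≤ 1 for at least one index i. -/

import Mathlib

def plumbDet (n : ℕ) (e : ℕ → ℤ) : ℤ :=
  Matrix.det (Matrix.of fun i j : Fin n =>
    if (i : ℕ) = (j : ℕ) then e ((i : ℕ) + 1)
    else if (i : ℕ) + 1 = (j : ℕ) ∨ (j : ℕ) + 1 = (i : ℕ) then 1 else 0)

lemma plumbDet_rec (n : ℕ) (e : ℕ → ℤ) :
    plumbDet (n + 2) e =
      e 1 * plumbDet (n + 1) (fun k => e (k + 1)) - plumbDet n (fun k => e (k + 2)) := by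
  set M : Matrix (Fin (n+2)) (Fin (n+2)) ℤ := Matrix.of fun i j : Fin (n+2) =>
    if (i : ℕ) = (j : ℕ) then e ((i : ℕ) + 1)
    else if (i : ℕ) + 1 = (j : ℕ) ∨ (j : ℕ) + 1 = (i : ℕ) then 1 else 0 with hM
  have h0 : plumbDet (n+2) e = M.det := rfl
  rw [h0, Matrix.det_succ_row_zero, Fin.sum_univ_succ, Fin.sum_univ_succ]
  have htail : ∀ j : Fin n,
      (-1 : ℤ) ^ ((j.succ.succ : Fin (n+2)) : ℕ) * M 0 j.succ.succ *
        (M.submatrix Fin.succ (Fin.succAbove j.succ.succ)).det = 0 := by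
    intro j
    have : M 0 j.succ.succ = 0 := by
      simp only [hM, Matrix.of_apply]
      have : ((j.succ.succ : Fin (n+2)) : ℕ) = (j : ℕ) + 2 := rfl
      rw [this]
      norm_num
    rw [this]; ring
  rw [Finset.sum_eq_zero (fun j _ => htail j), add_zero]
  have e00 : M 0 0 = e 1 := by simp [hM]
  have e01 : M 0 (Fin.succ 0) = 1 := by
    simp only [hM, Matrix.of_apply]
    norm_num
  have h1 : (M.submatrix Fin.succ (Fin.succAbove 0)).det
      = plumbDet (n+1) (fun k => e (k+1)) := by
    unfold plumbDet
    congr 1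
    ext i j
    simp only [hM, Matrix.submatrix_apply, Matrix.of_apply, Fin.succAbove_zero,
      Fin.val_succ]
    split_ifs <;> first | rfl | omega
  have h2 : (M.submatrix Fin.succ (Fin.succ 0).succAbove).det
      = plumbDet n (fun k => e (k+2)) := by
    set N := M.submatrix Fin.succ (Fin.succ 0).succAbove with hN
    rw [Matrix.det_succ_column_zero]
    rw [Fin.sum_univ_succ]
    have hcol : ∀ i : Fin n, N i.succ 0 = 0 := by
      intro i
      have hc : (((Fin.succ 0 : Fin (n+2)).succAbove 0 : Fin (n+2)) : ℕ) = 0 := rfl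
      simp only [hN, Matrix.submatrix_apply, hM, Matrix.of_apply, hc, Fin.val_succ]
      norm_num
    have htail2 : ∀ i : Fin n,
        (-1:ℤ) ^ (i.succ : ℕ) * N i.succ 0 * (N.submatrix i.succ.succAbove Fin.succ).det = 0 := by
      intro i; rw [hcol i]; ring
    rw [Finset.sum_eq_zero (fun i _ => htail2 i), add_zero]
    have hN00 : N 0 0 = 1 := by
      have hc : (((Fin.succ 0 : Fin (n+2)).succAbove 0 : Fin (n+2)) : ℕ) = 0 := rfl
      simp only [hN, Matrix.submatrix_apply, hM, Matrix.of_apply, hc]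
      norm_num
    rw [hN00]
    have hcoord : ∀ j : Fin n,
        (((Fin.succ 0 : Fin (n+2)).succAbove j.succ : Fin (n+2)) : ℕ) = (j : ℕ) + 2 := by
      intro j
      have : ¬ (j.succ.castSucc < (Fin.succ 0 : Fin (n+2))) := by
        simp [Fin.lt_def]
      rw [Fin.succAbove, if_neg this]
      rfl
    have h3 : (N.submatrix (Fin.succAbove 0) Fin.succ).det = plumbDet n (fun k => e (k+2)) := by
      unfold plumbDet
      congr 1
      ext i j
      simp only [hN, Matrix.submatrix_apply, hM, Matrix.of_apply, Fin.succAbove_zero,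
        Fin.val_succ, hcoord j]
      split_ifs <;> first | rfl | omega
    simpa using h3
  rw [e00, e01, h1, h2]
  simp
  ring
lemma plumbDet_zero (e : ℕ → ℤ) : plumbDet 0 e = 1 := by
  simp [plumbDet]

lemma plumbDet_one (e : ℕ → ℤ) : plumbDet 1 e = e 1 := by
  simp [plumbDet]

lemma plumbDet_grow (n : ℕ) : ∀ e : ℕ → ℤ,
    (∀ i, 1 ≤ i → i ≤ n + 1 → 2 ≤ |e i|) →
    |plumbDet n (fun k => e (k + 1))| + 1 ≤ |plumbDet (n + 1) e| := by
  induction n with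
  | zero =>
    intro e he
    have h1 : plumbDet (0 + 1) e = e 1 := plumbDet_one e
    rw [h1, plumbDet_zero, abs_one]
    have := he 1 le_rfl le_rfl
    omega
  | succ m ih =>
    intro e he
    have hrec := plumbDet_rec m e
    have hih := ih (fun k => e (k + 1)) (fun i h1 h2 => he (i + 1) (by omega) (by omega))
    have he1 : 2 ≤ |e 1| := he 1 le_rfl (by omega)
    set A := plumbDet (m + 1) (fun k => e (k + 1)) with hA
    have hAB : |plumbDet m (fun k => e (k + 2))| + 1 ≤ |A| := by
      have : (fun k => e (k + 2)) = (fun k => (fun j => e (j + 1)) (k + 1)) := by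
        funext k; ring_nf
      rw [this]; exact hih
    rw [hrec]
    have h1 : |e 1 * A| = |e 1| * |A| := abs_mul _ _
    have h2 : |e 1| * |A| - |plumbDet m (fun k => e (k + 2))| ≤ |e 1 * A - plumbDet m (fun k => e (k + 2))| := by
      have := abs_sub_abs_le_abs_sub (e 1 * A) (plumbDet m (fun k => e (k + 2)))
      omega
    nlinarith [abs_nonneg A, abs_nonneg (plumbDet m (fun k => e (k + 2)))]

/-- Let n ≥ 1 and let e_1, ..., e_n be integers with |f(e_1, ..., e_n)| ≤ 1.  Then
|e_i| ≤ 1 for at least one index i. -/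
theorem plumbDet_small_entry (n : ℕ) (hn : 1 ≤ n) (e : ℕ → ℤ)
    (hf : |plumbDet n e| ≤ 1) :
    ∃ i, 1 ≤ i ∧ i ≤ n ∧ |e i| ≤ 1 := by
  by_contra h
  push_neg at h
  obtain ⟨m, rfl⟩ : ∃ m, n = m + 1 := ⟨n - 1, by omega⟩
  have hbig : ∀ i, 1 ≤ i → i ≤ m + 1 → 2 ≤ |e i| := fun i h1 h2 => by
    have := h i h1 h2; omega
  have hgrow := plumbDet_grow m e hbig
  have hpos : 1 ≤ |plumbDet m (fun k => e (k + 1))| := by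
    cases m with
    | zero => simp [plumbDet_zero]
    | succ p =>
      have := plumbDet_grow p (fun k => e (k + 1))
        (fun i h1 h2 => hbig (i + 1) (by omega) (by omega))
      have hnn := abs_nonneg (plumbDet p (fun k => e (k + 1 + 1)))
      omega
  omega
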